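/- Let h ≥ 2 and let f : ℤ → ℕ∞ be a function with f⁻¹(0) finite. Then there exists a set A of integers such that for every integer n, the number of nondecreasing h-tuples of elements of A summing to n equals f(n). -/

import Mathlib

/-- The representation function of order `h` of `A ⊆ ℤ`: the number of
nondecreasing `h`-tuples of elements of `A` with sum `n`, valued in `ℕ∞`. -/
noncomputable def repFn (A : Set ℤ) (h : ℕ) (n : ℤ) : ℕ∞ :=
  {g : Fin h → ℤ | Monotone g ∧ (∀ i, g i ∈ A) ∧ ∑ i, g i = n}.encard

namespace NathRep

def MS (A : Set ℤ) (h : ℕ) (n : ℤ) : Set (Multiset ℤ) :=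
  {s | Multiset.card s = h ∧ (∀ x ∈ s, x ∈ A) ∧ s.sum = n}

lemma repFn_eq (A : Set ℤ) (h : ℕ) (n : ℤ) : repFn A h n = (MS A h n).encard := by
  rw [repFn]
  rw [show MS A h n = (fun g : Fin h → ℤ => ((List.ofFn g : List ℤ) : Multiset ℤ)) ''
      {g : Fin h → ℤ | Monotone g ∧ (∀ i, g i ∈ A) ∧ ∑ i, g i = n} from ?_]
  · rw [Set.InjOn.encard_image]
    rintro g ⟨hg, -, -⟩ g' ⟨hg', -, -⟩ hgg
    rw [Multiset.coe_eq_coe] at hgg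
    exact List.ofFn_injective (List.Perm.eq_of_sortedLE
      (List.sortedLE_ofFn_iff.2 hg) (List.sortedLE_ofFn_iff.2 hg') hgg)
  · ext s
    constructor
    · rintro ⟨hcard, hmem, hsum⟩
      set l := Multiset.sort s (· ≤ ·) with hl
      have hlen : l.length = h := by
        rw [← Multiset.coe_card (l := l), Multiset.sort_eq, hcard]
      refine ⟨fun i => l.get (Fin.cast hlen.symm i), ⟨?_, ?_, ?_⟩, ?_⟩
      · exact fun i j hij => (List.Pairwise.sortedLE (Multiset.pairwise_sort s (· ≤ ·))) (by simpa using hij)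
      · intro i
        exact hmem _ ((Multiset.mem_sort _).1 (List.get_mem l _))
      · have : (List.ofFn fun i => l.get (Fin.cast hlen.symm i)) = l := by
          apply List.ext_get (by simp [hlen])
          intro i h1 h2
          simp [List.get_ofFn]
        calc ∑ i, l.get (Fin.cast hlen.symm i)
            = (List.ofFn fun i => l.get (Fin.cast hlen.symm i)).sum := by
              rw [List.sum_ofFn]
          _ = l.sum := by rw [this]
          _ = s.sum := by rw [← Multiset.sort_eq s (· ≤ ·), hl, Multiset.sum_coe]
          _ = n := hsum
      · show ((List.ofFn _ : List ℤ) : Multiset ℤ) = s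
        have : (List.ofFn fun i => l.get (Fin.cast hlen.symm i)) = l := by
          apply List.ext_get (by simp [hlen])
          intro i h1 h2
          simp [List.get_ofFn]
        rw [this, hl, Multiset.sort_eq]
    · rintro ⟨g, ⟨hg, hmem, hsum⟩, rfl⟩
      refine ⟨by simp, ?_, by simp [List.sum_ofFn, hsum]⟩
      intro x hx
      rw [Multiset.mem_coe, List.mem_ofFn] at hx
      obtain ⟨i, rfl⟩ := hx
      exact hmem i


lemma decomp {x y : ℤ} (hxy : x ≠ y) {A : Set ℤ}
    {s : Multiset ℤ} (hs : ∀ z ∈ s, z = x ∨ z = y ∨ z ∈ A) :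
    ∃ (a b : ℕ) (u : Multiset ℤ), s = Multiset.replicate a x + Multiset.replicate b y + u ∧
      (∀ z ∈ u, z ∈ A) ∧ a + b + Multiset.card u = Multiset.card s := by
  classical
  set u := s.filter (fun z => z ≠ x ∧ z ≠ y) with hu
  have hdec : s = Multiset.replicate (s.count x) x + Multiset.replicate (s.count y) y + u := by
    ext z
    simp only [Multiset.count_add, Multiset.count_replicate, hu, Multiset.count_filter]
    split_ifs <;> simp_all <;> tauto
  refine ⟨s.count x, s.count y, u, hdec, ?_, ?_⟩
  · intro z hz
    rw [hu, Multiset.mem_filter] at hz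
    rcases hs z hz.1 with h1 | h1 | h1
    · exact absurd h1 hz.2.1
    · exact absurd h1 hz.2.2
    · exact h1
  · conv_rhs => rw [hdec]
    simp [Multiset.card_add, Multiset.card_replicate]

lemma L1aux {h : ℕ} (hh : 2 ≤ h) {a b a' b' : ℕ} (hab : a + b ≤ h) (hab' : a' + b' ≤ h)
    (key : (b:ℤ) - b' = ((a:ℤ) - a') * ((h:ℤ) - 1)) (hlt : (a:ℤ) < a') :
    a = 0 ∧ b = 0 ∧ a' = 1 ∧ b' = h - 1 := by
  have hh' : (2:ℤ) ≤ (h:ℤ) := by exact_mod_cast hh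
  have habZ : (a:ℤ) + b ≤ h := by exact_mod_cast hab
  have habZ' : (a':ℤ) + b' ≤ h := by exact_mod_cast hab'
  have ha0 : (0:ℤ) ≤ a := Int.natCast_nonneg a
  have hb0 : (0:ℤ) ≤ b := Int.natCast_nonneg b
  have hb0' : (0:ℤ) ≤ b' := Int.natCast_nonneg b'
  have hsum : (a:ℤ) + b + ((a':ℤ) - a) * h ≤ h := by
    have : (a:ℤ) + b + ((a':ℤ) - a) * h = (a':ℤ) + b' := by linear_combination key
    linarith
  have hd : (a':ℤ) - a = 1 := by
    by_contra hne
    have h2 : (2:ℤ) ≤ (a':ℤ) - a := by omega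
    have := mul_le_mul_of_nonneg_right h2 (by linarith : (0:ℤ) ≤ (h:ℤ))
    linarith
  rw [hd, one_mul] at hsum
  have ha : (a:ℤ) = 0 := by linarith
  have hb : (b:ℤ) = 0 := by linarith
  have ha' : (a':ℤ) = 1 := by linarith
  have hb' : (b':ℤ) = (h:ℤ) - 1 := by
    rw [show (a:ℤ) - a' = -1 by linarith] at key
    linarith
  refine ⟨by exact_mod_cast ha, by exact_mod_cast hb, by exact_mod_cast ha', ?_⟩
  omega

lemma L1 {h : ℕ} (hh : 2 ≤ h) {a b a' b' : ℕ} (hab : a + b ≤ h) (hab' : a' + b' ≤ h)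
    (hc : (b : ℤ) - a * ((h : ℤ) - 1) = (b' : ℤ) - a' * ((h : ℤ) - 1)) :
    (a = a' ∧ b = b') ∨ (a = 0 ∧ b = 0 ∧ a' = 1 ∧ b' = h - 1) ∨
      (a' = 0 ∧ b' = 0 ∧ a = 1 ∧ b = h - 1) := by
  have key : (b:ℤ) - b' = ((a:ℤ) - a') * ((h:ℤ) - 1) := by linear_combination hc
  rcases lt_trichotomy (a:ℤ) (a':ℤ) with hlt | heq | hlt
  · exact Or.inr (Or.inl (L1aux hh hab hab' key hlt))
  · left
    rw [heq] at key
    simp only [sub_self, zero_mul] at key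
    constructor
    · exact_mod_cast heq
    · omega
  · refine Or.inr (Or.inr (L1aux hh hab' hab ?_ hlt))
    linear_combination -key


lemma mem_MS {A : Set ℤ} {h : ℕ} {n : ℤ} {s : Multiset ℤ} :
    s ∈ MS A h n ↔ Multiset.card s = h ∧ (∀ x ∈ s, x ∈ A) ∧ s.sum = n := Iff.rfl

def Bp (h : ℕ) (A : Set ℤ) : Prop :=
  ∀ ⦃u v : Multiset ℤ⦄, Multiset.card u < h → Multiset.card v = Multiset.card u →
    (∀ z ∈ u, z ∈ A) → (∀ z ∈ v, z ∈ A) → u.sum = v.sum → u = v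

lemma usum_bound {M : ℤ} {A : Finset ℤ} (hM : ∀ a ∈ A, |a| ≤ M) {u : Multiset ℤ}
    (hu : ∀ z ∈ u, z ∈ (A : Set ℤ)) : |u.sum| ≤ (Multiset.card u : ℤ) * M := by
  calc |u.sum| ≤ (u.map abs).sum := Multiset.abs_sum_le_sum_abs
    _ ≤ (Multiset.card (u.map abs)) • M := by
        refine Multiset.sum_le_card_nsmul _ _ ?_
        intro z hz
        obtain ⟨w, hw, rfl⟩ := Multiset.mem_map.1 hz
        exact hM w (hu w hw)
    _ = (Multiset.card u : ℤ) * M := by rw [Multiset.card_map, nsmul_eq_mul]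

set_option maxHeartbeats 1000000 in
lemma step (h : ℕ) (hh : 2 ≤ h) (A : Finset ℤ) (hB : Bp h ↑A) (n N : ℤ) :
    ∃ B : Finset ℤ, A ⊆ B ∧ Bp h ↑B ∧
      (∃ s₀, s₀ ∉ MS ↑A h n ∧ MS ↑B h n = insert s₀ (MS ↑A h n)) ∧
      (∀ m : ℤ, m ≠ n → MS ↑B h m ≠ MS ↑A h m →
        MS ↑A h m = ∅ ∧ (∃ s, MS ↑B h m = {s}) ∧ N < |m|) := by
  classical
  obtain ⟨M, hM0, hM⟩ : ∃ M : ℤ, 0 ≤ M ∧ ∀ a ∈ A, |a| ≤ M :=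
    ⟨((A.sup fun a => a.natAbs : ℕ) : ℤ), Int.natCast_nonneg _, fun a ha => by
      rw [Int.abs_eq_natAbs]
      exact_mod_cast Finset.le_sup (f := fun a => a.natAbs) ha⟩
  have hh' : (2:ℤ) ≤ (h:ℤ) := by exact_mod_cast hh
  have habs : 0 ≤ |n| := abs_nonneg n
  have habsN : 0 ≤ |N| := abs_nonneg N
  have hnn : n ≤ |n| := le_abs_self n
  have hNN : N ≤ |N| := le_abs_self N
  set t : ℤ := (3*(h:ℤ)+3) * (|n| + M + |N| + 1) with ht
  set x : ℤ := n - ((h:ℤ)-1) * t with hx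
  have hhM : 0 ≤ (h:ℤ)*M := mul_nonneg (by linarith) hM0
  have hhn : 0 ≤ (h:ℤ)*|n| := mul_nonneg (by linarith) habs
  have hhN : 0 ≤ (h:ℤ)*|N| := mul_nonneg (by linarith) habsN
  have htbig : (h:ℤ)*|n| + 2*(h:ℤ)*M + |N| + (h:ℤ)*M + |n| < t := by nlinarith
  have htpos : 0 < t := by nlinarith
  have hyA : t ∉ A := by
    intro hmem
    have := hM t hmem
    rw [abs_of_pos htpos] at this
    nlinarith
  have hxneg : x < -M := by
    have h1 : ((h:ℤ)-1) * t ≥ 1 * t := by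
      apply mul_le_mul_of_nonneg_right _ htpos.le
      linarith
    rw [hx]
    nlinarith
  have hxA : x ∉ A := by
    intro hmem
    have := hM x hmem
    have := neg_abs_le x
    nlinarith [abs_nonneg x, (abs_le.1 (hM x hmem)).1]
  have hxy : x ≠ t := by
    intro hxt
    rw [hxt] at hxneg
    nlinarith
  set B : Finset ℤ := insert x (insert t A) with hBdef
  have hAB : A ⊆ B := by
    intro a ha
    simp [hBdef, ha]
  have memB : ∀ z, z ∈ (↑B : Set ℤ) → z = x ∨ z = t ∨ z ∈ (↑A : Set ℤ) := by
    intro z hz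
    simpa [hBdef] using hz
  have sumform : ∀ (a b : ℕ) (u : Multiset ℤ),
      (Multiset.replicate a x + Multiset.replicate b t + u).sum
        = (a:ℤ)*n + ((b:ℤ) - (a:ℤ)*((h:ℤ)-1))*t + u.sum := by
    intro a b u
    rw [Multiset.sum_add, Multiset.sum_add, Multiset.sum_replicate, Multiset.sum_replicate,
      nsmul_eq_mul, nsmul_eq_mul, hx]
    ring
  have dec : ∀ s : Multiset ℤ, (∀ z ∈ s, z ∈ (↑B : Set ℤ)) →
      ∃ (a b : ℕ) (u : Multiset ℤ), s = Multiset.replicate a x + Multiset.replicate b t + u ∧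
        (∀ z ∈ u, z ∈ (↑A : Set ℤ)) ∧ a + b + Multiset.card u = Multiset.card s ∧
        s.sum = (a:ℤ)*n + ((b:ℤ) - (a:ℤ)*((h:ℤ)-1))*t + u.sum := by
    intro s hs
    obtain ⟨a, b, u, he, hu, hc⟩ := decomp hxy (fun z hz => memB z (hs z hz))
    exact ⟨a, b, u, he, hu, hc, by rw [he, sumform]⟩
  have bigval : ∀ (a : ℕ) (c S : ℤ), a ≤ h → c ≠ 0 → |S| ≤ (h:ℤ)*M →
      N < |(a:ℤ)*n + c*t + S| ∧ (h:ℤ)*M < |(a:ℤ)*n + c*t + S| ∧ (a:ℤ)*n + c*t + S ≠ n := by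
    intro a c S ha hc hS
    have h1 : t ≤ |c*t| := by
      rw [abs_mul, abs_of_pos htpos]
      have h2 : (1:ℤ) ≤ |c| := Int.one_le_abs hc
      nlinarith
    have h3 : |(a:ℤ)*n| ≤ (h:ℤ)*|n| := by
      rw [abs_mul, Nat.abs_cast]
      apply mul_le_mul_of_nonneg_right _ habs
      exact_mod_cast ha
    have h2 : |c*t| ≤ |(a:ℤ)*n + c*t + S| + (h:ℤ)*|n| + (h:ℤ)*M := by
      have e1 : c*t = ((a:ℤ)*n + c*t + S) + (-((a:ℤ)*n)) + (-S) := by ring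
      calc |c*t| ≤ |((a:ℤ)*n + c*t + S) + (-((a:ℤ)*n))| + |(-S)| := by
              conv_lhs => rw [e1]
              exact abs_add_le _ _
        _ ≤ |(a:ℤ)*n + c*t + S| + |(-((a:ℤ)*n))| + |(-S)| := by
              have := abs_add_le ((a:ℤ)*n + c*t + S) (-((a:ℤ)*n))
              linarith
        _ ≤ |(a:ℤ)*n + c*t + S| + (h:ℤ)*|n| + (h:ℤ)*M := by
              rw [abs_neg, abs_neg]
              linarith
    refine ⟨by linarith, by linarith, ?_⟩
    intro he
    rw [he] at h2
    linarith [le_abs_self n, neg_abs_le n, abs_nonneg n]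
  have ceq : ∀ (a b a' b' : ℕ) (S S' : ℤ), a ≤ h → a' ≤ h → |S| ≤ (h:ℤ)*M → |S'| ≤ (h:ℤ)*M →
      (a:ℤ)*n + ((b:ℤ)-(a:ℤ)*((h:ℤ)-1))*t + S = (a':ℤ)*n + ((b':ℤ)-(a':ℤ)*((h:ℤ)-1))*t + S' →
      (b:ℤ)-(a:ℤ)*((h:ℤ)-1) = (b':ℤ)-(a':ℤ)*((h:ℤ)-1) := by
    intro a b a' b' S S' ha ha' hS hS' heq
    by_contra hne
    have hd : ((b:ℤ)-(a:ℤ)*((h:ℤ)-1)) - ((b':ℤ)-(a':ℤ)*((h:ℤ)-1)) ≠ 0 := sub_ne_zero.2 hne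
    have h1 : t ≤ |(((b:ℤ)-(a:ℤ)*((h:ℤ)-1)) - ((b':ℤ)-(a':ℤ)*((h:ℤ)-1))) * t| := by
      rw [abs_mul, abs_of_pos htpos]
      have := Int.one_le_abs hd
      nlinarith
    have h2 : (((b:ℤ)-(a:ℤ)*((h:ℤ)-1)) - ((b':ℤ)-(a':ℤ)*((h:ℤ)-1))) * t
        = ((a':ℤ)-a)*n + (S' - S) := by linear_combination heq
    have e1 : |((a':ℤ)-a)*n| ≤ (h:ℤ)*|n| := by
      rw [abs_mul]
      apply mul_le_mul_of_nonneg_right _ habs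
      rw [abs_le]
      constructor <;> omega
    have e2 : |S' - S| ≤ 2*((h:ℤ)*M) := by
      calc |S' - S| = |S' + -S| := by rw [sub_eq_add_neg]
        _ ≤ |S'| + |(-S)| := abs_add_le _ _
        _ ≤ 2*((h:ℤ)*M) := by rw [abs_neg]; linarith
    have h3 : |((a':ℤ)-a)*n + (S' - S)| ≤ (h:ℤ)*|n| + 2*((h:ℤ)*M) :=
      le_trans (abs_add_le _ _) (by linarith)
    rw [h2] at h1
    linarith
  set s₀ : Multiset ℤ := x ::ₘ Multiset.replicate (h-1) t with hs₀
  have hs₀card : Multiset.card s₀ = h := by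
    rw [hs₀, Multiset.card_cons, Multiset.card_replicate]; omega
  have hs₀memB : ∀ z ∈ s₀, z ∈ (↑B : Set ℤ) := by
    intro z hz
    rw [hs₀, Multiset.mem_cons] at hz
    rcases hz with rfl | hz
    · simp [hBdef]
    · rw [Multiset.eq_of_mem_replicate hz]
      simp [hBdef]
  have hcast1 : ((h-1:ℕ):ℤ) = (h:ℤ)-1 := by push_cast [Nat.cast_sub (by omega : 1 ≤ h)]; ring
  have hs₀sum : s₀.sum = n := by
    rw [hs₀, Multiset.sum_cons, Multiset.sum_replicate, nsmul_eq_mul, hcast1, hx]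
    ring
  have hs₀MS : s₀ ∈ MS ↑B h n := ⟨hs₀card, hs₀memB, hs₀sum⟩
  have hxs₀ : x ∈ s₀ := Multiset.mem_cons_self _ _
  have hs₀notA : s₀ ∉ MS ↑A h n := fun hmem => hxA (by exact_mod_cast hmem.2.1 x hxs₀)
  have usb : ∀ (u : Multiset ℤ), (∀ z ∈ u, z ∈ (↑A:Set ℤ)) → Multiset.card u ≤ h →
      |u.sum| ≤ (h:ℤ)*M := by
    intro u hu hc
    have h1 := usum_bound hM hu
    have h2 : (Multiset.card u : ℤ) ≤ (h:ℤ) := by exact_mod_cast hc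
    have h3 := mul_le_mul_of_nonneg_right h2 hM0
    linarith
  have newshape : ∀ m : ℤ, ∀ s ∈ MS (↑B) h m, (∀ z ∈ s, z ∈ (↑A : Set ℤ)) ∨ (s = s₀ ∧ m = n) ∨
      (N < |m| ∧ (h:ℤ)*M < |m| ∧ m ≠ n) := by
    intro m s hsB
    obtain ⟨hcard, hmem, hsum⟩ := hsB
    obtain ⟨a, b, u, he, hu, hcards, hval⟩ := dec s hmem
    by_cases hab0 : a = 0 ∧ b = 0
    · left
      obtain ⟨rfl, rfl⟩ := hab0
      simp only [Multiset.replicate_zero, zero_add] at he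
      rw [he]; exact hu
    · by_cases hab1 : a = 1 ∧ b = h - 1
      · right; left
        obtain ⟨ha1, hb1⟩ := hab1
        have hucard : Multiset.card u = 0 := by omega
        have hu0 : u = 0 := Multiset.card_eq_zero.1 hucard
        have hc0 : ((b:ℤ) - (a:ℤ)*((h:ℤ)-1)) = 0 := by
          rw [ha1, hb1, hcast1]; push_cast; ring
        constructor
        · rw [he, ha1, hb1, hu0]
          rw [hs₀]
          rw [Multiset.replicate_one]
          rw [add_zero, Multiset.singleton_add]
        · rw [← hsum, hval, hc0, hu0, ha1]
          simp
      · right; right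
        have hc0 : ((b:ℤ) - (a:ℤ)*((h:ℤ)-1)) ≠ 0 := by
          intro hc
          have hceq : (b:ℤ) - (a:ℤ)*((h:ℤ)-1) = ((h-1:ℕ):ℤ) - ((1:ℕ):ℤ)*((h:ℤ)-1) := by
            rw [hc, hcast1]; push_cast; ring
          rcases L1 hh (show a + b ≤ h by omega) (show 1 + (h-1) ≤ h by omega) hceq
            with h1 | h2 | h3
          · exact hab1 ⟨h1.1, h1.2⟩
          · exact hab0 ⟨h2.1, h2.2.1⟩
          · omega
        have hSb : |u.sum| ≤ (h:ℤ)*M := usb u hu (by omega)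
        obtain ⟨g1, g2, g3⟩ := bigval a ((b:ℤ) - (a:ℤ)*((h:ℤ)-1)) u.sum (by omega) hc0 hSb
        rw [← hsum, hval]
        exact ⟨g1, g2, g3⟩
  have uniq : ∀ m : ℤ, ∀ s ∈ MS (↑B) h m, ∀ s' ∈ MS (↑B) h m,
      ¬(∀ z ∈ s, z ∈ (↑A : Set ℤ)) → ¬(∀ z ∈ s', z ∈ (↑A : Set ℤ)) → s = s' := by
    intro m s hsB s' hsB'
    obtain ⟨hcard, hmem, hsum⟩ := hsB
    obtain ⟨hcard', hmem', hsum'⟩ := hsB'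
    obtain ⟨a, b, u, he, hu, hcards, hval⟩ := dec s hmem
    obtain ⟨a', b', u', he', hu', hcards', hval'⟩ := dec s' hmem'
    intro hns hns'
    have hab : ¬(a = 0 ∧ b = 0) := by
      rintro ⟨rfl, rfl⟩
      simp only [Multiset.replicate_zero, zero_add] at he
      exact hns (he ▸ hu)
    have hab' : ¬(a' = 0 ∧ b' = 0) := by
      rintro ⟨rfl, rfl⟩
      simp only [Multiset.replicate_zero, zero_add] at he'
      exact hns' (he' ▸ hu')
    have hSb : |u.sum| ≤ (h:ℤ)*M := usb u hu (by omega)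
    have hSb' : |u'.sum| ≤ (h:ℤ)*M := usb u' hu' (by omega)
    have hvv : (a:ℤ)*n + ((b:ℤ)-(a:ℤ)*((h:ℤ)-1))*t + u.sum
        = (a':ℤ)*n + ((b':ℤ)-(a':ℤ)*((h:ℤ)-1))*t + u'.sum := by
      rw [← hval, ← hval', hsum, hsum']
    have hcc := ceq a b a' b' u.sum u'.sum (by omega) (by omega) hSb hSb' hvv
    rcases L1 hh (show a + b ≤ h by omega) (show a' + b' ≤ h by omega) hcc with h1 | h2 | h3
    · obtain ⟨haa, hbb⟩ := h1
      have hus : u.sum = u'.sum := by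
        rw [haa, hbb] at hvv
        linarith
      have hucard : Multiset.card u' = Multiset.card u := by omega
      have hult : Multiset.card u < h := by omega
      have huu := hB hult hucard hu hu' hus
      rw [he, he', haa, hbb, huu]
    · exact absurd ⟨h2.1, h2.2.1⟩ hab
    · exact absurd ⟨h3.1, h3.2.1⟩ hab'
  have hBpB : Bp h ↑B := by
    intro u v hcu hcv humem hvmem husum
    obtain ⟨a, b, w, he, hw, hcards⟩ := decomp hxy (fun z hz => memB z (humem z hz))
    obtain ⟨a', b', w', he', hw', hcards'⟩ := decomp hxy (fun z hz => memB z (hvmem z hz))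
    have hSb : |w.sum| ≤ (h:ℤ)*M := usb w hw (by omega)
    have hSb' : |w'.sum| ≤ (h:ℤ)*M := usb w' hw' (by omega)
    have hvv : (a:ℤ)*n + ((b:ℤ)-(a:ℤ)*((h:ℤ)-1))*t + w.sum
        = (a':ℤ)*n + ((b':ℤ)-(a':ℤ)*((h:ℤ)-1))*t + w'.sum := by
      rw [← sumform a b w, ← sumform a' b' w', ← he, ← he', husum]
    have hcc := ceq a b a' b' w.sum w'.sum (by omega) (by omega) hSb hSb' hvv
    rcases L1 hh (show a + b ≤ h by omega) (show a' + b' ≤ h by omega) hcc with h1 | h2 | h3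
    · obtain ⟨haa, hbb⟩ := h1
      have hws : w.sum = w'.sum := by
        rw [haa, hbb] at hvv
        linarith
      have hwcard : Multiset.card w' = Multiset.card w := by omega
      have hwlt : Multiset.card w < h := by omega
      have hww := hB hwlt hwcard hw hw' hws
      rw [he, he', haa, hbb, hww]
    · omega
    · omega
  have hsub : ∀ m : ℤ, MS (↑A) h m ⊆ MS (↑B) h m := by
    intro m s hs
    exact ⟨hs.1, fun z hz => (Finset.coe_subset.2 hAB) (hs.2.1 z hz), hs.2.2⟩
  have hAempty : ∀ m : ℤ, (h:ℤ)*M < |m| → MS (↑A) h m = ∅ := by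
    intro m hm
    ext s'
    simp only [Set.mem_empty_iff_false, iff_false]
    intro hs'
    have h1 : |s'.sum| ≤ (h:ℤ)*M := usb s' hs'.2.1 (le_of_eq hs'.1)
    rw [hs'.2.2] at h1
    linarith
  refine ⟨B, hAB, hBpB, ⟨s₀, hs₀notA, ?_⟩, ?_⟩
  · apply Set.Subset.antisymm
    · intro s hs
      rcases newshape n s hs with hall | ⟨rfl, -⟩ | ⟨-, -, hne⟩
      · exact Set.mem_insert_of_mem _ ⟨hs.1, hall, hs.2.2⟩
      · exact Set.mem_insert _ _
      · exact absurd rfl hne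
    · rintro s (rfl | hs)
      · exact hs₀MS
      · exact hsub n hs
  · intro m hmn hchg
    have hex : ∃ s ∈ MS (↑B) h m, s ∉ MS (↑A) h m := by
      by_contra hno
      push_neg at hno
      exact hchg (Set.Subset.antisymm hno (hsub m))
    obtain ⟨s, hsB, hsnA⟩ := hex
    have hnall : ¬(∀ z ∈ s, z ∈ ((↑A : Set ℤ))) := fun hall => hsnA ⟨hsB.1, hall, hsB.2.2⟩
    rcases newshape m s hsB with hall | ⟨-, hmn'⟩ | ⟨g1, g2, -⟩
    · exact absurd hall hnall
    · exact absurd hmn' hmn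
    refine ⟨hAempty m g2, ⟨s, ?_⟩, g1⟩
    ext s'
    simp only [Set.mem_singleton_iff]
    constructor
    · intro hs'B
      by_cases hall' : ∀ z ∈ s', z ∈ ((↑A : Set ℤ))
      · exfalso
        have : s' ∈ MS (↑A) h m := ⟨hs'B.1, hall', hs'B.2.2⟩
        rw [hAempty m g2] at this
        exact this
      · exact uniq m s' hs'B s hsB hall' hnall
    · rintro rfl
      exact hsB


lemma natsucc (c : ℕ) : ¬((c:ℕ∞)+1 ≤ (c:ℕ∞)) := by
  intro hle
  have h2 : ((c+1:ℕ):ℕ∞) ≤ ((c:ℕ):ℕ∞) := by push_cast; exact hle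
  exact absurd (Nat.cast_le.1 h2) (by omega)

lemma MS_mono {A B : Set ℤ} (hAB : A ⊆ B) (h : ℕ) (n : ℤ) : MS A h n ⊆ MS B h n :=
  fun s hs => ⟨hs.1, fun z hz => hAB (hs.2.1 z hz), hs.2.2⟩

lemma enum_exists : ∃ e : ℕ → ℤ, ∀ (m : ℤ) (K : ℕ), ∃ k, K ≤ k ∧ e k = m := by
  refine ⟨fun k => (Denumerable.eqv ℤ).symm (Nat.unpair k).1, fun m K => ?_⟩
  refine ⟨Nat.pair ((Denumerable.eqv ℤ) m) K, Nat.right_le_pair _ _, ?_⟩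
  simp [Nat.unpair_pair]

theorem main (h : ℕ) (hh : 2 ≤ h) (f : ℤ → ℕ∞) (hf : (f ⁻¹' {0}).Finite) :
    ∃ A : Set ℤ, ∀ n : ℤ, (MS A h n).encard = f n := by
  classical
  obtain ⟨e, he⟩ := enum_exists
  obtain ⟨N, hN⟩ : ∃ N : ℤ, ∀ m : ℤ, f m = 0 → |m| ≤ N := by
    obtain ⟨N, hN⟩ := (hf.image (fun z => |z|)).bddAbove
    exact ⟨N, fun m hm => hN ⟨m, hm, rfl⟩⟩
  -- the conditional step
  have key : ∀ A : Finset ℤ, Bp h ↑A → ∀ m : ℤ, ∃ B : Finset ℤ, A ⊆ B ∧ Bp h ↑B ∧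
      ((MS ↑A h m).encard < f m → (MS ↑B h m).encard = (MS ↑A h m).encard + 1) ∧
      (∀ m', (MS ↑A h m').encard ≤ f m' → (MS ↑B h m').encard ≤ f m') := by
    intro A hBp m
    by_cases hlt : (MS ↑A h m).encard < f m
    · obtain ⟨B, hAB, hBpB, ⟨s₀, hs₀n, hs₀eq⟩, hrest⟩ := step h hh A hBp m N
      refine ⟨B, hAB, hBpB, ?_, ?_⟩
      · intro _
        rw [hs₀eq, Set.encard_insert_of_notMem hs₀n]
      · intro m' hm'
        by_cases hmm : m' = m
        · subst hmm
          rw [hs₀eq, Set.encard_insert_of_notMem hs₀n]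
          exact Order.add_one_le_of_lt hlt
        · by_cases hch : MS ↑B h m' = MS ↑A h m'
          · rw [hch]; exact hm'
          · obtain ⟨hemp, ⟨s, hsingle⟩, hNm⟩ := hrest m' hmm hch
            rw [hsingle, Set.encard_singleton]
            have hne : f m' ≠ 0 := by
              intro h0
              have := hN m' h0
              linarith
            exact ENat.one_le_iff_ne_zero.2 hne
    · exact ⟨A, subset_rfl, hBp, fun hc => absurd hc hlt, fun _ hm' => hm'⟩
  have hBpEmpty : Bp h (↑(∅ : Finset ℤ)) := by
    intro u v _ hcv hu hv _
    have hu0 : u = 0 := Multiset.eq_zero_of_forall_notMem fun z hz => by simpa using hu z hz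
    have hv0 : v = 0 := Multiset.eq_zero_of_forall_notMem fun z hz => by simpa using hv z hz
    rw [hu0, hv0]
  -- the sequence
  let T := {A : Finset ℤ // Bp h ↑A}
  let step' : T → ℤ → T := fun p m => ⟨(key p.1 p.2 m).choose, ((key p.1 p.2 m).choose_spec).2.1⟩
  let Aseq : ℕ → T := fun k => Nat.rec ⟨(∅ : Finset ℤ), hBpEmpty⟩ (fun k Ak => step' Ak (e k)) k
  have hAseq_succ : ∀ k, Aseq (k+1) = step' (Aseq k) (e k) := fun k => rfl
  let cnt : ℕ → ℤ → ℕ∞ := fun k m => (MS ↑(Aseq k).1 h m).encard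
  have hmono : ∀ k, (Aseq k).1 ⊆ (Aseq (k+1)).1 := by
    intro k
    exact ((key (Aseq k).1 (Aseq k).2 (e k)).choose_spec).1
  have hmono' : ∀ k l, k ≤ l → (Aseq k).1 ⊆ (Aseq l).1 := by
    intro k l hkl
    induction l with
    | zero => rw [Nat.le_zero.1 hkl]
    | succ l ih =>
      rcases Nat.le_succ_iff.1 hkl with h1 | h1
      · exact (ih h1).trans (hmono l)
      · rw [h1]
  have hprog : ∀ k, cnt k (e k) < f (e k) → cnt (k+1) (e k) = cnt k (e k) + 1 := by
    intro k hlt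
    exact ((key (Aseq k).1 (Aseq k).2 (e k)).choose_spec).2.2.1 hlt
  have hinv : ∀ k m, cnt k m ≤ f m := by
    intro k
    induction k with
    | zero =>
      intro m
      have : MS ↑((∅:Finset ℤ)) h m = ∅ := by
        ext s
        simp only [Set.mem_empty_iff_false, iff_false]
        intro hs
        have hc : 0 < Multiset.card s := by rw [hs.1]; omega
        obtain ⟨z, hz⟩ := Multiset.card_pos_iff_exists_mem.1 hc
        simpa using hs.2.1 z hz
      show (MS ↑((∅:Finset ℤ)) h m).encard ≤ f m
      rw [this]
      simp
    | succ k ih =>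
      intro m
      exact ((key (Aseq k).1 (Aseq k).2 (e k)).choose_spec).2.2.2 m (ih m)
  have hcntmono : ∀ k l m, k ≤ l → cnt k m ≤ cnt l m := by
    intro k l m hkl
    exact Set.encard_mono (MS_mono (by exact_mod_cast hmono' k l hkl) h m)
  set A : Set ℤ := ⋃ k, ↑((Aseq k).1 : Finset ℤ) with hA
  have hsubk : ∀ k, (↑((Aseq k).1) : Set ℤ) ⊆ A := fun k => Set.subset_iUnion (fun k => (↑((Aseq k).1) : Set ℤ)) k
  have hsubA : ∀ k m, MS ↑(Aseq k).1 h m ⊆ MS A h m := fun k m => MS_mono (hsubk k) h m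
  refine ⟨A, fun m => ?_⟩
  -- upper bound
  have hub : (MS A h m).encard ≤ f m := by
    by_contra hgt
    push_neg at hgt
    have hfm : f m ≠ ⊤ := fun htop => by rw [htop] at hgt; exact (not_top_lt) hgt
    obtain ⟨c, hc⟩ := WithTop.ne_top_iff_exists.1 hfm
    rw [← hc] at hgt
    have hle : ((c:ℕ∞) + 1) ≤ (MS A h m).encard := Order.add_one_le_of_lt hgt
    obtain ⟨Tset, hTsub, hTcard⟩ := Set.exists_subset_encard_eq hle
    have hTfin : Tset.Finite := by
      apply Set.finite_of_encard_eq_coe (k := c + 1)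
      rw [hTcard]; push_cast; rfl
    -- all elements of all multisets in Tset
    have hexk : ∃ k, ∀ s ∈ Tset, ∀ z ∈ s, z ∈ ((Aseq k).1 : Finset ℤ) := by
      -- the set of elements is finite
      have hEfin : (⋃ s ∈ Tset, {z | z ∈ s}).Finite := by
        apply Set.Finite.biUnion hTfin
        intro s _
        exact s.toFinset.finite_toSet.subset (by intro z hz; simpa using hz)
      have hEsub : (⋃ s ∈ Tset, {z | z ∈ s}) ⊆ A := by
        intro z hz
        simp only [Set.mem_iUnion] at hz
        obtain ⟨s, hs, hzs⟩ := hz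
        exact (hTsub hs).2.1 z hzs
      -- choose indices
      have : ∀ z ∈ (⋃ s ∈ Tset, {z | z ∈ s}), ∃ k, z ∈ ((Aseq k).1 : Finset ℤ) := by
        intro z hz
        have := hEsub hz
        rw [hA] at this
        simpa using this
      choose idx hidx using this
      refine ⟨hEfin.toFinset.sup (fun z => if hz : z ∈ (⋃ s ∈ Tset, {w | w ∈ s}) then idx z hz else 0), ?_⟩
      intro s hs z hz
      have hzE : z ∈ (⋃ s ∈ Tset, {w | w ∈ s}) := by
        simp only [Set.mem_iUnion]
        exact ⟨s, hs, hz⟩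
      have hle' : idx z hzE ≤ hEfin.toFinset.sup (fun z => if hz : z ∈ (⋃ s ∈ Tset, {w | w ∈ s}) then idx z hz else 0) := by
        have hmem : z ∈ hEfin.toFinset := hEfin.mem_toFinset.2 hzE
        have hls := Finset.le_sup (f := fun w => if hw : w ∈ (⋃ s ∈ Tset, {w | w ∈ s}) then idx w hw else 0) hmem
        simp only [dif_pos hzE] at hls
        exact hls
      exact hmono' _ _ hle' (hidx z hzE)
    obtain ⟨k, hk⟩ := hexk
    have hTk : Tset ⊆ MS ↑((Aseq k).1) h m := by
      intro s hs
      refine ⟨(hTsub hs).1, ?_, (hTsub hs).2.2⟩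
      intro z hz
      exact_mod_cast hk s hs z hz
    have : (c:ℕ∞) + 1 ≤ cnt k m := hTcard ▸ Set.encard_mono hTk
    have h2 := (hinv k m).trans_eq hc.symm
    exact natsucc c (this.trans h2)
  -- lower bound
  have hlb2 : ∀ c : ℕ, (c : ℕ∞) ≤ f m → ∃ k, (c:ℕ∞) ≤ cnt k m := by
    intro c
    induction c with
    | zero => exact fun _ => ⟨0, by simp⟩
    | succ c ih =>
      intro hc1
      have hcle : (c:ℕ∞) ≤ f m := le_trans (by push_cast; exact le_self_add) hc1
      obtain ⟨k, hk⟩ := ih hcle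
      by_cases hdone : ((c:ℕ∞)+1) ≤ cnt k m
      · exact ⟨k, by push_cast; exact_mod_cast hdone⟩
      · push_neg at hdone
        have hck : cnt k m = (c:ℕ∞) := le_antisymm (by exact Order.le_of_lt_add_one hdone) hk
        obtain ⟨k', hkk', hek'⟩ := he m k
        have hck' : cnt k' m = (c:ℕ∞) ∨ ((c:ℕ∞)+1) ≤ cnt k' m := by
          rcases eq_or_lt_of_le (hck ▸ hcntmono k k' m hkk') with h1 | h1
          · exact Or.inl h1.symm
          · exact Or.inr (Order.add_one_le_of_lt h1)
        rcases hck' with h1 | h1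
        · have hlt : cnt k' m < f m := by
            rw [h1]
            exact lt_of_lt_of_le (by exact_mod_cast Nat.lt_succ_self c) hc1
          refine ⟨k'+1, ?_⟩
          rw [← hek'] at hlt h1 ⊢
          rw [hprog k' hlt, h1]
          push_cast
          exact le_refl _
        · exact ⟨k', by push_cast; exact_mod_cast h1⟩
  have hlb : f m ≤ (MS A h m).encard := by
    by_cases hfm : f m = ⊤
    · rw [hfm]
      rw [top_le_iff]
      by_contra hne
      obtain ⟨c, hc⟩ := WithTop.ne_top_iff_exists.1 hne
      obtain ⟨k, hk⟩ := hlb2 (c+1) (by rw [hfm]; exact le_top)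
      have h4 := hk.trans (Set.encard_mono (hsubA k m))
      rw [← hc] at h4
      exact natsucc c (by push_cast at h4; exact h4)
    · obtain ⟨c, hc⟩ := WithTop.ne_top_iff_exists.1 hfm
      obtain ⟨k, hk⟩ := hlb2 c (le_of_eq hc)
      rw [← hc]
      exact hk.trans (Set.encard_mono (hsubA k m))
  exact le_antisymm hub hlb


end NathRep

/-- Every function `f : ℤ → ℕ∞` with `f⁻¹(0)` finite is the representation
function of order `h` of some set of integers, for every `h ≥ 2`. -/
theorem every_function_is_representation_function (h : ℕ) (hh : 2 ≤ h)
    (f : ℤ → ℕ∞) (hf : (f ⁻¹' {0}).Finite) :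
    ∃ A : Set ℤ, ∀ n : ℤ, repFn A h n = f n := by
  obtain ⟨A, hA⟩ := NathRep.main h hh f hf
  exact ⟨A, fun n => by rw [NathRep.repFn_eq]; exact hA n⟩
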